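/- Let (A_n)_{n≥1} be a sequence of nonnegative d×d real matrices. For a nonnegative matrix M, let N(M) denote the number of distinct columns of its zero-pattern, i.e., the cardinality of the set of sets {i : M_{i,j} ≠ 0} as j ranges over the column indices. Then: (a) for every n and n' > n+1 one has N(P_{n,n'}) ≤ N(P_{n+1,n'}), so the quantity δ := lim_{n→∞} limsup_{n'→∞} N(P_{n,n'}) exists (the inner limsup being non-decreasing in n and bounded); (b) there exists n_1 ∈ ℕ such that for every n ≥ n_1 there is an infinite set H_n of integers greater than or equal to n with N(P_{n,n'}) = δ for all n' ∈ H_n, and N(P_{n,n'}) ≤ δ for all n' ≥ min H_n. -/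

import Mathlib

open Matrix Filter
open scoped Classical

/-- `P_{m,n} = A_{m+1} ⋯ A_n` (ordered product); `P_{n,n} = I`. -/
def matProd {d : ℕ} (A : ℕ → Matrix (Fin d) (Fin d) ℝ) (m n : ℕ) :
    Matrix (Fin d) (Fin d) ℝ :=
  ((List.range (n - m)).map fun i => A (m + 1 + i)).prod

/-- `N(M)`: the number of distinct zero-patterns among the columns of `M`. -/
noncomputable def numColPatterns {d : ℕ} (M : Matrix (Fin d) (Fin d) ℝ) : ℕ :=
  (Finset.image (fun j => Finset.univ.filter fun i => M i j ≠ 0)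
    (Finset.univ : Finset (Fin d))).card

lemma listProd_nonneg {d : ℕ} (L : List (Matrix (Fin d) (Fin d) ℝ))
    (h : ∀ M ∈ L, ∀ i j, 0 ≤ M i j) : ∀ i j, 0 ≤ L.prod i j := by
  induction L with
  | nil =>
      intro i j
      simp only [List.prod_nil]
      by_cases hij : i = j <;> simp [Matrix.one_apply, hij]
  | cons M L ih =>
      intro i j
      rw [List.prod_cons, Matrix.mul_apply]
      refine Finset.sum_nonneg fun k _ => mul_nonneg (h M List.mem_cons_self i k)
        (ih (fun N hN => h N (List.mem_cons_of_mem _ hN)) k j)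

lemma matProd_nonneg {d : ℕ} (A : ℕ → Matrix (Fin d) (Fin d) ℝ)
    (hA : ∀ n i j, 0 ≤ A n i j) (m n : ℕ) : ∀ i j, 0 ≤ matProd A m n i j := by
  apply listProd_nonneg
  intro M hM i j
  simp only [List.mem_map, List.mem_range] at hM
  obtain ⟨k, -, rfl⟩ := hM
  exact hA _ i j

lemma matProd_succ_left {d : ℕ} (A : ℕ → Matrix (Fin d) (Fin d) ℝ) {m n : ℕ} (h : m < n) :
    matProd A m n = A (m + 1) * matProd A (m + 1) n := by
  unfold matProd
  have h1 : n - m = (n - (m + 1)) + 1 := by omega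
  rw [h1, List.range_succ_eq_map, List.map_cons, List.prod_cons, List.map_map]
  congr 1
  · exact congrArg List.prod (List.map_congr_left (fun i _ => congrArg A (by omega)))

lemma numColPatterns_le {d : ℕ} (M : Matrix (Fin d) (Fin d) ℝ) : numColPatterns M ≤ d := by
  unfold numColPatterns
  exact (Finset.card_image_le).trans (by simp)

lemma numColPatterns_mul_le {d : ℕ} (B M : Matrix (Fin d) (Fin d) ℝ)
    (hB : ∀ i j, 0 ≤ B i j) (hM : ∀ i j, 0 ≤ M i j) :
    numColPatterns (B * M) ≤ numColPatterns M := by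
  classical
  set g : Finset (Fin d) → Finset (Fin d) :=
    fun S => Finset.univ.filter (fun i => ∃ k ∈ S, B i k ≠ 0) with hg
  have key : ∀ j, (Finset.univ.filter fun i => (B * M) i j ≠ 0)
      = g (Finset.univ.filter fun i => M i j ≠ 0) := by
    intro j
    ext i
    simp only [hg, Finset.mem_filter, Finset.mem_univ, true_and]
    rw [Matrix.mul_apply]
    rw [← not_iff_not]
    push_neg
    constructor
    · intro hsum k hk
      have := Finset.sum_eq_zero_iff_of_nonneg
        (fun k _ => mul_nonneg (hB i k) (hM k j)) |>.mp hsum k (Finset.mem_univ k)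
      rcases mul_eq_zero.mp this with h | h
      · exact h
      · exact absurd h hk
    · intro hall
      apply Finset.sum_eq_zero
      intro k _
      by_cases hk : M k j = 0
      · rw [hk, mul_zero]
      · rw [hall k hk, zero_mul]
  unfold numColPatterns
  calc (Finset.image (fun j => Finset.univ.filter fun i => (B * M) i j ≠ 0) Finset.univ).card
      = (Finset.image (g ∘ fun j => Finset.univ.filter fun i => M i j ≠ 0) Finset.univ).card := by
        congr 1; apply Finset.image_congr; intro j _; exact key j
    _ = ((Finset.image (fun j => Finset.univ.filter fun i => M i j ≠ 0) Finset.univ).image g).card := by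
        rw [Finset.image_image]
    _ ≤ _ := Finset.card_image_le
/-- Lemma C.3: (a) `N(P_{n,n'}) ≤ N(P_{n+1,n'})`, so
`δ = lim_n limsup_{n'} N(P_{n,n'})` exists (the limsups are eventually constant); and
(b) from some rank `n₁` on, for every `n ≥ n₁` there is an infinite set `H_n ⊆ {n,n+1,…}`
with `N(P_{n,n'}) = δ` for `n' ∈ H_n` and `N(P_{n,n'}) ≤ δ` for all `n' ≥ min H_n`. -/
theorem num_col_patterns_monotone_and_stabilizes {d : ℕ}
    (A : ℕ → Matrix (Fin d) (Fin d) ℝ)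
    (hA : ∀ n i j, 0 ≤ A n i j) :
    (∀ n n' : ℕ, n + 1 < n' →
      numColPatterns (matProd A n n') ≤ numColPatterns (matProd A (n + 1) n')) ∧
    ∃ δ : ℕ,
      (∃ n₀ : ℕ, ∀ n ≥ n₀,
        Filter.limsup (fun n' => numColPatterns (matProd A n n')) Filter.atTop = δ) ∧
      ∃ n₁ : ℕ, ∀ n ≥ n₁, ∃ H : Set ℕ,
        H.Infinite ∧ (∀ m ∈ H, n ≤ m) ∧
        (∀ m ∈ H, numColPatterns (matProd A n m) = δ) ∧
        (∀ m : ℕ, sInf H ≤ m → numColPatterns (matProd A n m) ≤ δ) := by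
  classical
  set u : ℕ → ℕ → ℕ := fun n n' => numColPatterns (matProd A n n') with hu
  have mono : ∀ n n' : ℕ, n + 1 < n' → u n n' ≤ u (n + 1) n' := by
    intro n n' h
    have h1 : n < n' := by omega
    rw [hu]
    simp only
    rw [matProd_succ_left A h1]
    exact numColPatterns_mul_le _ _ (hA (n + 1)) (matProd_nonneg A hA (n + 1) n')
  refine ⟨mono, ?_⟩
  have hub : ∀ n n', u n n' ≤ d := fun n n' => numColPatterns_le _
  have bdd : ∀ n, Filter.IsBoundedUnder (· ≤ ·) Filter.atTop (u n) :=
    fun n => Filter.isBoundedUnder_of ⟨d, fun n' => hub n n'⟩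
  have cobdd : ∀ n, Filter.IsCoboundedUnder (· ≤ ·) Filter.atTop (u n) :=
    fun n => (Filter.isBoundedUnder_of ⟨0, fun n' => Nat.zero_le _⟩ :
      Filter.IsBoundedUnder (· ≥ ·) Filter.atTop (u n)).isCoboundedUnder_le
  set L : ℕ → ℕ := fun n => Filter.limsup (u n) Filter.atTop with hL
  have hLmono : Monotone L := by
    apply monotone_nat_of_le_succ
    intro n
    refine Filter.limsup_le_limsup ?_ (cobdd n) (bdd (n + 1))
    filter_upwards [Filter.eventually_ge_atTop (n + 2)] with n' hn'
    exact mono n n' (by omega)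
  have hLle : ∀ n, L n ≤ d := by
    intro n
    exact Filter.limsup_le_of_le (cobdd n) (Filter.Eventually.of_forall fun n' => hub n n')
  set δ : ℕ := sSup (Set.range L) with hδ
  have hmem : δ ∈ Set.range L :=
    Nat.sSup_mem (Set.range_nonempty L) ⟨d, by rintro x ⟨n, rfl⟩; exact hLle n⟩
  obtain ⟨n₀, hn₀⟩ := hmem
  have hLconst : ∀ n ≥ n₀, L n = δ := by
    intro n hn
    refine le_antisymm ?_ ?_
    · exact le_csSup ⟨d, by rintro x ⟨m, rfl⟩; exact hLle m⟩ ⟨n, rfl⟩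
    · rw [← hn₀]; exact hLmono hn
  refine ⟨δ, ⟨n₀, hLconst⟩, n₀, ?_⟩
  intro n hn
  have hlim : L n = δ := hLconst n hn
  have hev : ∀ᶠ n' in Filter.atTop, u n n' ≤ δ := by
    have hlt : Filter.limsup (u n) Filter.atTop < δ + 1 := by have := hlim; change Filter.limsup (u n) Filter.atTop = δ at this; omega
    filter_upwards [Filter.eventually_lt_of_limsup_lt hlt (bdd n)] with n' hn'
    omega
  have hfreq : ∃ᶠ n' in Filter.atTop, δ ≤ u n n' := by
    rcases Nat.eq_zero_or_pos δ with h0 | hpos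
    · exact Filter.Frequently.of_forall fun n' => by omega
    · have hlt : δ - 1 < Filter.limsup (u n) Filter.atTop := by have := hlim; change Filter.limsup (u n) Filter.atTop = δ at this; omega
      exact (Filter.frequently_lt_of_lt_limsup (cobdd n) hlt).mono fun n' h => by omega
  have hfeq : ∃ᶠ n' in Filter.atTop, u n n' = δ :=
    (hfreq.and_eventually hev).mono fun n' ⟨h1, h2⟩ => le_antisymm h2 h1
  obtain ⟨M₀, hM₀⟩ := Filter.eventually_atTop.mp hev
  set N := max n M₀ with hN
  set H : Set ℕ := {m | N ≤ m ∧ u n m = δ} with hH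
  have hHinf : H.Infinite := by
    rw [← Nat.frequently_atTop_iff_infinite]
    exact (hfeq.and_eventually (Filter.eventually_ge_atTop N)).mono fun m ⟨h1, h2⟩ => ⟨h2, h1⟩
  refine ⟨H, hHinf, fun m hm => le_trans (le_max_left _ _) hm.1, fun m hm => hm.2, ?_⟩
  intro m hm
  have hne : H.Nonempty := hHinf.nonempty
  have hinf_mem : sInf H ∈ H := Nat.sInf_mem hne
  have : M₀ ≤ m := le_trans (le_trans (le_max_right n M₀) hinf_mem.1) hm
  exact hM₀ m this
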